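/- Let F : ℝ → ℝ vanish on (-∞, 0), be nondecreasing and right-continuous, and suppose the Laplace–Stieltjes integral g(t) = ∫₀⁻^∞ e^{-tv} dF(v) is finite for every t > 0. If for some Δ > 0 one has lim_{t → 0⁺} t^Δ · g(t) = 1, then lim_{Λ → ∞} Λ^{-Δ} · Γ(Δ+1) · F(Λ) = 1. -/

import Mathlib

open MeasureTheory Filter Topology Set Real

lemma HLT.gamma_int {Δ : ℝ} (hΔ : 0 < Δ) {a : ℝ} (ha : 0 < a) :
    ∫ s in Ioi (0:ℝ), Real.exp (-(a*s)) * s ^ (Δ-1) = a ^ (-Δ) * Real.Gamma Δ := by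
  have h := integral_rpow_mul_exp_neg_mul_rpow (p := 1) (q := Δ - 1) (b := a)
    one_pos (by linarith) ha
  simp only [Real.rpow_one, neg_mul] at h
  have e : ∀ s:ℝ, Real.exp (-(a*s)) * s ^ (Δ-1) = s ^ (Δ-1) * Real.exp (-(a*s)) :=
    fun s => mul_comm _ _
  simp only [e, h, show Δ-1+1 = Δ by ring]
  norm_num

lemma HLT.gamma_integrable {Δ : ℝ} (hΔ : 0 < Δ) :
    IntegrableOn (fun s => Real.exp (-s) * s ^ (Δ-1)) (Ioi (0:ℝ)) := by
  simpa using Real.GammaIntegral_convergent hΔ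

variable {f : StieltjesFunction ℝ}

lemma HLT.tendsto_bot (hneg : ∀ x < (0 : ℝ), f x = 0) : Tendsto f atBot (𝓝 (0:ℝ)) := by
  refine Tendsto.congr' ?_ tendsto_const_nhds
  filter_upwards [eventually_le_atBot (-1 : ℝ)] with x hx
  exact (hneg x (by linarith)).symm

lemma HLT.measure_Iic' (hneg : ∀ x < (0 : ℝ), f x = 0) (y : ℝ) :
    f.measure (Iic y) = ENNReal.ofReal (f y) := by
  simpa using f.measure_Iic (HLT.tendsto_bot hneg) y

lemma HLT.f_nonneg (hneg : ∀ x < (0 : ℝ), f x = 0) (y : ℝ) : 0 ≤ f y := by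
  rcases lt_or_ge y 0 with h | h
  · exact (hneg y h).ge
  · rw [← hneg (-1) (by norm_num)]; exact f.mono (by linarith)

lemma HLT.fin_Iic (hneg : ∀ x < (0 : ℝ), f x = 0) (y : ℝ) : f.measure (Iic y) ≠ ⊤ := by
  rw [HLT.measure_Iic' hneg]; exact ENNReal.ofReal_ne_top

lemma HLT.toReal_Iic (hneg : ∀ x < (0 : ℝ), f x = 0) (y : ℝ) : (f.measure (Iic y)).toReal = f y := by
  rw [HLT.measure_Iic' hneg, ENNReal.toReal_ofReal (HLT.f_nonneg hneg y)]

lemma HLT.ae_nonneg (hneg : ∀ x < (0 : ℝ), f x = 0) : ∀ᵐ v ∂f.measure, (0:ℝ) ≤ v := by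
  rw [ae_iff]
  have : {v : ℝ | ¬ (0:ℝ) ≤ v} = Iio 0 := by ext v; simp [not_le]
  rw [this]
  have h1 : Iio (0:ℝ) = ⋃ n : ℕ, Iic (-((n:ℝ)+1)⁻¹) := by
    ext x
    simp only [mem_Iio, mem_iUnion, mem_Iic]
    constructor
    · intro hx
      obtain ⟨n, hn⟩ := exists_nat_one_div_lt (show (0:ℝ) < -x by linarith)
      exact ⟨n, by rw [one_div] at hn; linarith⟩
    · rintro ⟨n, hn⟩
      have : (0:ℝ) < ((n:ℝ)+1)⁻¹ := by positivity
      linarith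
  rw [h1]
  refine measure_iUnion_null fun n => ?_
  rw [HLT.measure_Iic' hneg, hneg _ (neg_lt_zero.mpr (by positivity))]
  simp

-- scaled monomial limit
lemma HLT.mono_lim {Δ : ℝ} (hΔ : 0 < Δ)
    (hlim : Tendsto (fun t : ℝ => t ^ Δ * ∫ v, Real.exp (-t * v) ∂f.measure)
      (𝓝[>] (0 : ℝ)) (𝓝 1)) (c : ℝ) (hc : 0 < c) :
    Tendsto (fun t : ℝ => t ^ Δ * ∫ v, Real.exp (-(c*t) * v) ∂f.measure)
      (𝓝[>] (0 : ℝ)) (𝓝 (c ^ (-Δ))) := by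
  have hmap : Tendsto (fun t : ℝ => c * t) (𝓝[>] (0:ℝ)) (𝓝[>] (0:ℝ)) := by
    refine tendsto_nhdsWithin_of_tendsto_nhds_of_eventually_within _ ?_ ?_
    · have : Tendsto (fun t:ℝ => c * t) (𝓝 0) (𝓝 (c*0)) := (tendsto_id.const_mul c)
      rw [mul_zero] at this
      exact this.mono_left nhdsWithin_le_nhds
    · filter_upwards [self_mem_nhdsWithin] with t ht
      exact mul_pos hc ht
  have h1 := (hlim.comp hmap).const_mul (c ^ (-Δ))
  rw [mul_one] at h1
  refine h1.congr' ?_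
  filter_upwards [self_mem_nhdsWithin] with t ht
  have ht' : (0:ℝ) < t := ht
  simp only [Function.comp]
  rw [Real.mul_rpow hc.le ht'.le, ← mul_assoc, ← mul_assoc,
    ← Real.rpow_add hc, neg_add_cancel, Real.rpow_zero, one_mul]

-- integrability of exp(-tv) * G(exp(-tv)) wrt f.measure
lemma HLT.cont_integrable
    (hneg : ∀ x < (0 : ℝ), f x = 0)
    (hint : ∀ t : ℝ, 0 < t → Integrable (fun v => Real.exp (-t * v)) f.measure)
    {G : ℝ → ℝ} (hG : Continuous G) {t : ℝ} (ht : 0 < t) :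
    Integrable (fun v => Real.exp (-t*v) * G (Real.exp (-t*v))) f.measure := by
  obtain ⟨C, hC⟩ := (isCompact_Icc (a := (0:ℝ)) (b := 1)).exists_bound_of_continuousOn
    hG.continuousOn
  refine Integrable.mono' ((hint t ht).const_mul (max C 1)) ?_ ?_
  · exact ((Real.continuous_exp.comp (continuous_const.mul continuous_id)).mul
      (hG.comp (Real.continuous_exp.comp (continuous_const.mul continuous_id)))).aestronglyMeasurable
  · filter_upwards [HLT.ae_nonneg hneg] with v hv
    have hx0 : 0 < Real.exp (-t*v) := Real.exp_pos _
    have hx1 : Real.exp (-t*v) ≤ 1 := by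
      rw [Real.exp_le_one_iff]
      have : 0 ≤ t*v := mul_nonneg ht.le hv
      linarith [neg_mul t v]
    have hb := hC (Real.exp (-t*v)) ⟨hx0.le, hx1⟩
    rw [Real.norm_eq_abs, abs_mul, abs_of_pos hx0, mul_comm (max C 1)]
    refine mul_le_mul_of_nonneg_left ?_ hx0.le
    rw [Real.norm_eq_abs] at hb
    exact hb.trans (le_max_left _ _)

lemma HLT.rhs_integrable {Δ : ℝ} (hΔ : 0 < Δ) {G : ℝ → ℝ} (hG : Continuous G) :
    IntegrableOn (fun s => Real.exp (-s) * G (Real.exp (-s)) * s ^ (Δ-1)) (Ioi (0:ℝ)) := by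
  obtain ⟨C, hC⟩ := (isCompact_Icc (a := (0:ℝ)) (b := 1)).exists_bound_of_continuousOn
    hG.continuousOn
  refine Integrable.mono' ((HLT.gamma_integrable hΔ).const_mul (max C 1)) ?_ ?_
  · refine ContinuousOn.aestronglyMeasurable ?_ measurableSet_Ioi
    refine (((Real.continuous_exp.comp continuous_neg).mul
      (hG.comp (Real.continuous_exp.comp continuous_neg))).continuousOn).mul
      (continuousOn_id.rpow_const fun x hx => Or.inl (ne_of_gt hx))
  · filter_upwards [ae_restrict_mem measurableSet_Ioi] with s hs
    have hs' : (0:ℝ) < s := hs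
    have hx0 : 0 < Real.exp (-s) := Real.exp_pos _
    have hx1 : Real.exp (-s) ≤ 1 := Real.exp_le_one_iff.mpr (by linarith)
    have hb := hC (Real.exp (-s)) ⟨hx0.le, hx1⟩
    rw [Real.norm_eq_abs, abs_mul, abs_mul, abs_of_pos hx0,
      abs_of_pos (Real.rpow_pos_of_pos hs' _)]
    have : Real.exp (-s) * |G (Real.exp (-s))| ≤ max C 1 * Real.exp (-s) := by
      rw [mul_comm (max C 1)]
      exact mul_le_mul_of_nonneg_left ((Real.norm_eq_abs _ ▸ hb).trans (le_max_left _ _)) hx0.le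
    calc Real.exp (-s) * |G (Real.exp (-s))| * s ^ (Δ-1)
        ≤ max C 1 * Real.exp (-s) * s ^ (Δ-1) :=
          mul_le_mul_of_nonneg_right this (Real.rpow_pos_of_pos hs' _).le
      _ = max C 1 * (Real.exp (-s) * s ^ (Δ-1)) := by ring

lemma HLT.poly_lim (hneg : ∀ x < (0 : ℝ), f x = 0)
    (hint : ∀ t : ℝ, 0 < t → Integrable (fun v => Real.exp (-t * v)) f.measure)
    {Δ : ℝ} (hΔ : 0 < Δ)
    (hlim : Tendsto (fun t : ℝ => t ^ Δ * ∫ v, Real.exp (-t * v) ∂f.measure)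
      (𝓝[>] (0 : ℝ)) (𝓝 1)) (p : Polynomial ℝ) :
    Tendsto (fun t : ℝ => t ^ Δ * ∫ v, Real.exp (-t*v) * p.eval (Real.exp (-t*v)) ∂f.measure)
      (𝓝[>] (0 : ℝ))
      (𝓝 ((∫ s in Ioi (0:ℝ), Real.exp (-s) * p.eval (Real.exp (-s)) * s ^ (Δ-1)) / Real.Gamma Δ)) := by
  induction p using Polynomial.induction_on' with
  | add p q hp hq =>
      have h := hp.add hq
      have hRHS : (∫ s in Ioi (0:ℝ), Real.exp (-s) * (p+q).eval (Real.exp (-s)) * s ^ (Δ-1))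
          = (∫ s in Ioi (0:ℝ), Real.exp (-s) * p.eval (Real.exp (-s)) * s ^ (Δ-1))
            + ∫ s in Ioi (0:ℝ), Real.exp (-s) * q.eval (Real.exp (-s)) * s ^ (Δ-1) := by
        rw [← integral_add (HLT.rhs_integrable hΔ p.continuous) (HLT.rhs_integrable hΔ q.continuous)]
        refine setIntegral_congr_fun measurableSet_Ioi (fun s _ => ?_)
        simp [Polynomial.eval_add]; ring
      rw [hRHS, add_div]
      refine h.congr' ?_
      filter_upwards [self_mem_nhdsWithin] with t ht
      have ht' : (0:ℝ) < t := ht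
      rw [← mul_add, ← integral_add (HLT.cont_integrable hneg hint p.continuous ht')
        (HLT.cont_integrable hneg hint q.continuous ht')]
      congr 1
      refine integral_congr_ae (Eventually.of_forall fun v => ?_)
      simp [Polynomial.eval_add]; ring
  | monomial n c =>
      have key := (HLT.mono_lim hΔ hlim ((n:ℝ)+1) (by positivity)).const_mul c
      have hexp : ∀ x : ℝ, Real.exp x * (Real.exp x) ^ n = Real.exp (((n:ℝ)+1) * x) := by
        intro x
        rw [← Real.exp_nat_mul, ← Real.exp_add, add_mul, one_mul, add_comm]
      have hRHS : (∫ s in Ioi (0:ℝ), Real.exp (-s) * (Polynomial.monomial n c).eval (Real.exp (-s)) * s ^ (Δ-1))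
          = c * (((n:ℝ)+1) ^ (-Δ) * Real.Gamma Δ) := by
        rw [← HLT.gamma_int hΔ (show (0:ℝ) < (n:ℝ)+1 by positivity), ← integral_const_mul]
        refine setIntegral_congr_fun measurableSet_Ioi (fun s _ => ?_)
        rw [Polynomial.eval_monomial]
        have := hexp (-s)
        rw [show ((n:ℝ)+1) * (-s) = -(((n:ℝ)+1)*s) by ring] at this
        rw [← this]; ring
      rw [hRHS]
      have hL : c * (((n:ℝ)+1) ^ (-Δ) * Real.Gamma Δ) / Real.Gamma Δ = c * ((n:ℝ)+1) ^ (-Δ) := by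
        field_simp [(Real.Gamma_pos_of_pos hΔ).ne']
      rw [hL]
      refine key.congr' ?_
      filter_upwards [self_mem_nhdsWithin] with t ht
      rw [← mul_assoc, mul_comm c (t ^ Δ), mul_assoc, ← integral_const_mul]
      congr 1
      refine integral_congr_ae (Eventually.of_forall fun v => ?_)
      simp only [Polynomial.eval_monomial]
      have := hexp (-t*v)
      rw [show ((n:ℝ)+1) * (-t*v) = -(((n:ℝ)+1)*t)*v by ring] at this
      rw [← this]; ring

lemma HLT.cont_lim (hneg : ∀ x < (0 : ℝ), f x = 0)
    (hint : ∀ t : ℝ, 0 < t → Integrable (fun v => Real.exp (-t * v)) f.measure)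
    {Δ : ℝ} (hΔ : 0 < Δ)
    (hlim : Tendsto (fun t : ℝ => t ^ Δ * ∫ v, Real.exp (-t * v) ∂f.measure)
      (𝓝[>] (0 : ℝ)) (𝓝 1)) {G : ℝ → ℝ} (hG : Continuous G) :
    Tendsto (fun t : ℝ => t ^ Δ * ∫ v, Real.exp (-t*v) * G (Real.exp (-t*v)) ∂f.measure)
      (𝓝[>] (0 : ℝ))
      (𝓝 ((∫ s in Ioi (0:ℝ), Real.exp (-s) * G (Real.exp (-s)) * s ^ (Δ-1)) / Real.Gamma Δ)) := by
  have hΓ : 0 < Real.Gamma Δ := Real.Gamma_pos_of_pos hΔ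
  rw [Metric.tendsto_nhds]
  intro ε hε
  set ε' := ε / 5 with hε'def
  have hε' : 0 < ε' := by positivity
  obtain ⟨p, hp⟩ := exists_polynomial_near_of_continuousOn 0 1 G hG.continuousOn ε' hε'
  -- notation
  set LG : ℝ → ℝ := fun t => t ^ Δ * ∫ v, Real.exp (-t*v) * G (Real.exp (-t*v)) ∂f.measure
  set LP : ℝ → ℝ := fun t => t ^ Δ * ∫ v, Real.exp (-t*v) * p.eval (Real.exp (-t*v)) ∂f.measure
  set IG : ℝ := (∫ s in Ioi (0:ℝ), Real.exp (-s) * G (Real.exp (-s)) * s ^ (Δ-1)) / Real.Gamma Δ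
  set IP : ℝ := (∫ s in Ioi (0:ℝ), Real.exp (-s) * p.eval (Real.exp (-s)) * s ^ (Δ-1)) / Real.Gamma Δ
  -- (1) |IG - IP| ≤ ε'
  have h1 : |IG - IP| ≤ ε' := by
    have hsub : IG - IP = (∫ s in Ioi (0:ℝ),
        (Real.exp (-s) * G (Real.exp (-s)) * s ^ (Δ-1)
          - Real.exp (-s) * p.eval (Real.exp (-s)) * s ^ (Δ-1))) / Real.Gamma Δ := by
      rw [integral_sub (HLT.rhs_integrable hΔ hG) (HLT.rhs_integrable hΔ p.continuous), sub_div]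
    rw [hsub, abs_div, abs_of_pos hΓ, div_le_iff₀ hΓ]
    calc |∫ s in Ioi (0:ℝ), (Real.exp (-s) * G (Real.exp (-s)) * s ^ (Δ-1)
          - Real.exp (-s) * p.eval (Real.exp (-s)) * s ^ (Δ-1))|
        ≤ ∫ s in Ioi (0:ℝ), ε' * (Real.exp (-s) * s ^ (Δ-1)) := by
          rw [← Real.norm_eq_abs]
          refine (norm_integral_le_integral_norm _).trans ?_
          refine integral_mono_ae ((Integrable.sub (HLT.rhs_integrable hΔ hG)
            (HLT.rhs_integrable hΔ p.continuous)).norm) ((HLT.gamma_integrable hΔ).const_mul ε') ?_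
          filter_upwards [ae_restrict_mem measurableSet_Ioi] with s hs
          have hs' : (0:ℝ) < s := hs
          have hx0 : 0 < Real.exp (-s) := Real.exp_pos _
          have hx1 : Real.exp (-s) ≤ 1 := Real.exp_le_one_iff.mpr (by linarith)
          have hb := (hp (Real.exp (-s)) ⟨hx0.le, hx1⟩).le
          rw [Real.norm_eq_abs, show Real.exp (-s) * G (Real.exp (-s)) * s ^ (Δ-1)
            - Real.exp (-s) * p.eval (Real.exp (-s)) * s ^ (Δ-1)
            = -(Real.exp (-s) * (p.eval (Real.exp (-s)) - G (Real.exp (-s))) * s ^ (Δ-1)) by ring,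
            abs_neg, abs_mul, abs_mul, abs_of_pos hx0, abs_of_pos (Real.rpow_pos_of_pos hs' _)]
          calc Real.exp (-s) * |p.eval (Real.exp (-s)) - G (Real.exp (-s))| * s ^ (Δ-1)
              ≤ Real.exp (-s) * ε' * s ^ (Δ-1) := by
                refine mul_le_mul_of_nonneg_right (mul_le_mul_of_nonneg_left hb hx0.le)
                  (Real.rpow_pos_of_pos hs' _).le
            _ = ε' * (Real.exp (-s) * s ^ (Δ-1)) := by ring
      _ = ε' * Real.Gamma Δ := by
          rw [integral_const_mul]
          have := HLT.gamma_int hΔ (one_pos (α := ℝ))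
          simp only [one_mul, Real.one_rpow] at this
          rw [this]
  -- (2) eventually |LG t - LP t| ≤ 2 * ε'
  have h2 : ∀ᶠ t in 𝓝[>] (0:ℝ), |LG t - LP t| ≤ ε' * 2 := by
    filter_upwards [self_mem_nhdsWithin,
      hlim.eventually (eventually_le_nhds one_lt_two)] with t ht hle
    have ht' : (0:ℝ) < t := ht
    have htΔ : 0 < t ^ Δ := Real.rpow_pos_of_pos ht' _
    have hsub : LG t - LP t = t ^ Δ * ∫ v, (Real.exp (-t*v) * G (Real.exp (-t*v))
        - Real.exp (-t*v) * p.eval (Real.exp (-t*v))) ∂f.measure := by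
      rw [integral_sub (HLT.cont_integrable hneg hint hG ht')
        (HLT.cont_integrable hneg hint p.continuous ht'), mul_sub]
    rw [hsub, abs_mul, abs_of_pos htΔ]
    have hbound : |∫ v, (Real.exp (-t*v) * G (Real.exp (-t*v))
        - Real.exp (-t*v) * p.eval (Real.exp (-t*v))) ∂f.measure|
        ≤ ε' * ∫ v, Real.exp (-t*v) ∂f.measure := by
      rw [← integral_const_mul, ← Real.norm_eq_abs]
      refine (norm_integral_le_integral_norm _).trans ?_
      refine integral_mono_ae ((Integrable.sub (HLT.cont_integrable hneg hint hG ht')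
        (HLT.cont_integrable hneg hint p.continuous ht')).norm)
        ((hint t ht').const_mul ε') ?_
      filter_upwards [HLT.ae_nonneg hneg] with v hv
      have hx0 : 0 < Real.exp (-t*v) := Real.exp_pos _
      have hx1 : Real.exp (-t*v) ≤ 1 := by
        rw [Real.exp_le_one_iff]
        nlinarith
      have hb := (hp (Real.exp (-t*v)) ⟨hx0.le, hx1⟩).le
      rw [Real.norm_eq_abs, show Real.exp (-t*v) * G (Real.exp (-t*v))
        - Real.exp (-t*v) * p.eval (Real.exp (-t*v))
        = -(Real.exp (-t*v) * (p.eval (Real.exp (-t*v)) - G (Real.exp (-t*v)))) by ring,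
        abs_neg, abs_mul, abs_of_pos hx0, mul_comm ε']
      exact mul_le_mul_of_nonneg_left hb hx0.le
    calc t ^ Δ * |∫ v, (Real.exp (-t*v) * G (Real.exp (-t*v))
          - Real.exp (-t*v) * p.eval (Real.exp (-t*v))) ∂f.measure|
        ≤ t ^ Δ * (ε' * ∫ v, Real.exp (-t*v) ∂f.measure) :=
          mul_le_mul_of_nonneg_left hbound htΔ.le
      _ = ε' * (t ^ Δ * ∫ v, Real.exp (-t*v) ∂f.measure) := by ring
      _ ≤ ε' * 2 := mul_le_mul_of_nonneg_left hle hε'.le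
  -- (3) eventually |LP t - IP| < ε'
  have h3 : ∀ᶠ t in 𝓝[>] (0:ℝ), dist (LP t) IP < ε' :=
    Metric.tendsto_nhds.mp (HLT.poly_lim hneg hint hΔ hlim p) ε' hε'
  filter_upwards [h2, h3] with t h2t h3t
  rw [Real.dist_eq] at h3t ⊢
  have t1 : |LG t - IG| ≤ |LG t - LP t| + |LP t - IP| + |IP - IG| := by
    have := abs_sub_le (LG t) (LP t) IG
    have := abs_sub_le (LP t) IP IG
    linarith
  have : |IP - IG| ≤ ε' := by rw [abs_sub_comm]; exact h1
  have : |LG t - IG| < 4 * ε' := by linarith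
  rw [hε'def] at this
  linarith

noncomputable def HLT.Gp (δ x : ℝ) : ℝ :=
  min 1 (max 0 ((x - (Real.exp (-1) - δ))/δ)) / max x (Real.exp (-1) - δ)

noncomputable def HLT.Gm (δ x : ℝ) : ℝ :=
  min 1 (max 0 ((x - Real.exp (-1))/δ)) / max x (Real.exp (-1))

lemma HLT.Gp_cont {δ : ℝ} (hδ : 0 < δ) (hδc : δ < Real.exp (-1)) : Continuous (HLT.Gp δ) := by
  refine Continuous.div ?_ (continuous_id.max continuous_const) fun x => ?_
  · exact continuous_const.min (continuous_const.max ((continuous_id.sub continuous_const).div_const δ))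
  · have : (0:ℝ) < Real.exp (-1) - δ := by linarith
    exact ne_of_gt (lt_of_lt_of_le this (le_max_right _ _))

lemma HLT.Gm_cont {δ : ℝ} (hδ : 0 < δ) : Continuous (HLT.Gm δ) := by
  refine Continuous.div ?_ (continuous_id.max continuous_const) fun x => ?_
  · exact continuous_const.min (continuous_const.max ((continuous_id.sub continuous_const).div_const δ))
  · exact ne_of_gt (lt_of_lt_of_le (Real.exp_pos _) (le_max_right _ _))

lemma HLT.Gp_nonneg {δ x : ℝ} (hx : 0 < x) : 0 ≤ HLT.Gp δ x := by
  unfold HLT.Gp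
  refine div_nonneg (le_min zero_le_one (le_max_left _ _)) ?_
  exact le_trans hx.le (le_max_left _ _)

lemma HLT.Gm_le {δ x : ℝ} (hδ : 0 < δ) (hx : 0 < x) :
    x * HLT.Gm δ x ≤ (if Real.exp (-1) ≤ x then 1 else 0) := by
  unfold HLT.Gm
  set c := Real.exp (-1) with hc
  have hc0 : 0 < c := Real.exp_pos _
  rcases le_or_gt c x with h | h
  · rw [if_pos h, max_eq_left h]
    rw [show x * ((min 1 (max 0 ((x - c)/δ))) / x) = min 1 (max 0 ((x - c)/δ)) by
      field_simp]
    exact min_le_left _ _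
  · rw [if_neg (not_le.mpr h)]
    have hnum : min 1 (max 0 ((x - c)/δ)) = 0 := by
      rw [max_eq_left (by
        apply div_nonpos_of_nonpos_of_nonneg <;> [linarith; exact hδ.le] )]
      simp
    rw [hnum, zero_div, mul_zero]

lemma HLT.Gp_ge {δ x : ℝ} (hδ : 0 < δ) (hx : 0 < x) :
    (if Real.exp (-1) ≤ x then 1 else 0) ≤ x * HLT.Gp δ x := by
  unfold HLT.Gp
  set c := Real.exp (-1) with hc
  rcases le_or_gt c x with h | h
  · rw [if_pos h]
    have hnum : min 1 (max 0 ((x - (c - δ))/δ)) = 1 := by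
      have h1 : (1:ℝ) ≤ (x - (c - δ))/δ := by
        rw [le_div_iff₀ hδ]; linarith
      rw [max_eq_right (by linarith), min_eq_left h1]
    have hden : max x (c - δ) = x := max_eq_left (by linarith)
    rw [hnum, hden, mul_one_div, div_self hx.ne']
  · rw [if_neg (not_le.mpr h)]
    exact mul_nonneg hx.le (HLT.Gp_nonneg hx)

lemma HLT.indicator_integral {Δ : ℝ} (hΔ : 0 < Δ) :
    (∫ s in Ioi (0:ℝ), (if s ≤ 1 then s ^ (Δ-1) else 0)) = 1/Δ := by
  have h1 : (∫ s in Ioi (0:ℝ), (if s ≤ 1 then s ^ (Δ-1) else 0))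
      = ∫ s in Ioi (0:ℝ), (Iic (1:ℝ)).indicator (fun s => s ^ (Δ-1)) s := by
    refine setIntegral_congr_fun measurableSet_Ioi (fun s _ => ?_)
    rw [Set.indicator_apply]
    simp [mem_Iic]
  rw [h1, integral_indicator measurableSet_Iic, Measure.restrict_restrict measurableSet_Iic,
    show Iic (1:ℝ) ∩ Ioi 0 = Ioc 0 1 by ext x; simp [mem_Ioc, and_comm],
    ← intervalIntegral.integral_of_le zero_le_one,
    integral_rpow (Or.inl (by linarith))]
  rw [show Δ - 1 + 1 = Δ by ring, Real.one_rpow, Real.zero_rpow hΔ.ne']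
  norm_num

lemma HLT.indicator_integral' {Δ : ℝ} (hΔ : 0 < Δ) :
    (∫ s in Ioi (0:ℝ), (if s < 1 then s ^ (Δ-1) else 0)) = 1/Δ := by
  have h1 : (∫ s in Ioi (0:ℝ), (if s < 1 then s ^ (Δ-1) else 0))
      = ∫ s in Ioi (0:ℝ), (Iio (1:ℝ)).indicator (fun s => s ^ (Δ-1)) s := by
    refine setIntegral_congr_fun measurableSet_Ioi (fun s _ => ?_)
    rw [Set.indicator_apply]
    simp [mem_Iio]
  rw [h1, integral_indicator measurableSet_Iio, Measure.restrict_restrict measurableSet_Iio,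
    show Iio (1:ℝ) ∩ Ioi 0 = Ioo 0 1 by ext x; simp [mem_Ioo, and_comm],
    ← integral_Ioc_eq_integral_Ioo,
    ← intervalIntegral.integral_of_le zero_le_one,
    integral_rpow (Or.inl (by linarith))]
  rw [show Δ - 1 + 1 = Δ by ring, Real.one_rpow, Real.zero_rpow hΔ.ne']
  norm_num

lemma HLT.rhs_p_lim {Δ : ℝ} (hΔ : 0 < Δ) :
    Tendsto (fun δ => ∫ s in Ioi (0:ℝ),
        Real.exp (-s) * HLT.Gp δ (Real.exp (-s)) * s ^ (Δ-1)) (𝓝[>] (0:ℝ)) (𝓝 (1/Δ)) := by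
  set c := Real.exp (-1) with hc
  have hc0 : 0 < c := Real.exp_pos _
  rw [← HLT.indicator_integral hΔ]
  have hev : Ioo (0:ℝ) (c/2) ∈ 𝓝[>] (0:ℝ) :=
    Ioo_mem_nhdsGT_of_mem ⟨le_refl _, by positivity⟩
  refine tendsto_integral_filter_of_dominated_convergence
    (fun s => Real.exp 2 * (Real.exp (-s) * s ^ (Δ-1))) ?_ ?_
    ((HLT.gamma_integrable hΔ).const_mul _) ?_
  · filter_upwards [hev] with δ hδ
    refine ContinuousOn.aestronglyMeasurable ?_ measurableSet_Ioi
    have hGp := HLT.Gp_cont hδ.1 (lt_trans hδ.2 (by linarith))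
    exact (((Real.continuous_exp.comp continuous_neg).mul
      (hGp.comp (Real.continuous_exp.comp continuous_neg))).continuousOn).mul
      (continuousOn_id.rpow_const fun x hx => Or.inl (ne_of_gt hx))
  · filter_upwards [hev] with δ hδ
    filter_upwards [ae_restrict_mem measurableSet_Ioi] with s hs
    have hs' : (0:ℝ) < s := hs
    have hx0 : 0 < Real.exp (-s) := Real.exp_pos _
    have hsp : 0 < s ^ (Δ-1) := Real.rpow_pos_of_pos hs' _
    have hGnn : 0 ≤ HLT.Gp δ (Real.exp (-s)) := HLT.Gp_nonneg hx0
    rw [Real.norm_eq_abs, abs_of_nonneg (by positivity)]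
    rcases le_or_gt 2 s with h2 | h2
    · -- numerator is 0
      have hnum : min 1 (max 0 ((Real.exp (-s) - (c - δ))/δ)) = 0 := by
        have hxs : Real.exp (-s) ≤ Real.exp (-2) := by
          apply Real.exp_le_exp.mpr; linarith
        have hee : Real.exp (-2) < c - δ := by
          have h3 : Real.exp (-2) < c / 2 := by
            rw [hc, show (-2:ℝ) = -1 + -1 by norm_num, Real.exp_add]
            have he1 : Real.exp (-1) < 1/2 := by
              rw [Real.exp_neg]
              rw [inv_lt_comm₀ (Real.exp_pos 1) (by norm_num)]
              calc (1/2 : ℝ)⁻¹ = 2 := by norm_num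
                _ < Real.exp 1 := by
                    have := Real.add_one_lt_exp (x := 1) (by norm_num)
                    linarith
            calc Real.exp (-1) * Real.exp (-1) < (1/2) * Real.exp (-1) :=
                  mul_lt_mul_of_pos_right he1 (Real.exp_pos _)
              _ = c / 2 := by rw [hc]; ring
          linarith [hδ.2]
        rw [max_eq_left (div_nonpos_of_nonpos_of_nonneg (by linarith) hδ.1.le)]
        simp
      unfold HLT.Gp
      rw [hnum, zero_div, mul_zero, zero_mul]
      positivity
    · -- bound by s^(Δ-1) ≤ e^2 e^{-s} s^(Δ-1)
      have hb1 : Real.exp (-s) * HLT.Gp δ (Real.exp (-s)) ≤ 1 := by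
        unfold HLT.Gp
        rw [mul_div_assoc']
        rw [div_le_one (lt_of_lt_of_le hx0 (le_max_left _ _))]
        calc Real.exp (-s) * min 1 (max 0 ((Real.exp (-s) - (c - δ))/δ))
            ≤ Real.exp (-s) * 1 := mul_le_mul_of_nonneg_left (min_le_left _ _) hx0.le
          _ = Real.exp (-s) := mul_one _
          _ ≤ max (Real.exp (-s)) (c - δ) := le_max_left _ _
      calc Real.exp (-s) * HLT.Gp δ (Real.exp (-s)) * s ^ (Δ-1)
          ≤ 1 * s ^ (Δ-1) := mul_le_mul_of_nonneg_right hb1 hsp.le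
        _ = s ^ (Δ-1) := one_mul _
        _ ≤ Real.exp 2 * (Real.exp (-s) * s ^ (Δ-1)) := by
            rw [← mul_assoc, ← Real.exp_add]
            nth_rewrite 1 [← one_mul (s ^ (Δ-1))]
            refine mul_le_mul_of_nonneg_right ?_ hsp.le
            rw [← Real.exp_zero]
            exact Real.exp_le_exp.mpr (by linarith)
  · filter_upwards [ae_restrict_mem measurableSet_Ioi] with s hs
    have hs' : (0:ℝ) < s := hs
    have hx0 : 0 < Real.exp (-s) := Real.exp_pos _
    rcases le_or_gt s 1 with h1 | h1
    · -- constant s^(Δ-1)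
      rw [if_pos h1]
      have hxc : c ≤ Real.exp (-s) := Real.exp_le_exp.mpr (by linarith)
      refine Tendsto.congr' ?_ tendsto_const_nhds
      filter_upwards [self_mem_nhdsWithin] with δ hδ
      have hδ' : (0:ℝ) < δ := hδ
      have hnum : min 1 (max 0 ((Real.exp (-s) - (c - δ))/δ)) = 1 := by
        have hge : (1:ℝ) ≤ (Real.exp (-s) - (c - δ))/δ := by
          rw [le_div_iff₀ hδ']; linarith
        rw [max_eq_right (by linarith), min_eq_left hge]
      have hden : max (Real.exp (-s)) (c - δ) = Real.exp (-s) :=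
        max_eq_left (by linarith)
      unfold HLT.Gp
      rw [hnum, hden, mul_div_assoc', mul_one, div_self hx0.ne', one_mul]
    · rw [if_neg (not_le.mpr h1)]
      have hxc : Real.exp (-s) < c := by
        rw [hc]; exact Real.exp_lt_exp.mpr (by linarith)
      refine Tendsto.congr' ?_ tendsto_const_nhds
      filter_upwards [Ioo_mem_nhdsGT_of_mem ⟨le_refl (0:ℝ), sub_pos.mpr hxc⟩] with δ hδ
      have hnum : min 1 (max 0 ((Real.exp (-s) - (c - δ))/δ)) = 0 := by
        rw [max_eq_left (div_nonpos_of_nonpos_of_nonneg (by linarith [hδ.2]) hδ.1.le)]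
        simp
      unfold HLT.Gp
      rw [hnum, zero_div, mul_zero, zero_mul]

lemma HLT.rhs_m_lim {Δ : ℝ} (hΔ : 0 < Δ) :
    Tendsto (fun δ => ∫ s in Ioi (0:ℝ),
        Real.exp (-s) * HLT.Gm δ (Real.exp (-s)) * s ^ (Δ-1)) (𝓝[>] (0:ℝ)) (𝓝 (1/Δ)) := by
  set c := Real.exp (-1) with hc
  have hc0 : 0 < c := Real.exp_pos _
  rw [← HLT.indicator_integral' hΔ]
  refine tendsto_integral_filter_of_dominated_convergence
    (fun s => Real.exp 2 * (Real.exp (-s) * s ^ (Δ-1))) ?_ ?_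
    ((HLT.gamma_integrable hΔ).const_mul _) ?_
  · filter_upwards [self_mem_nhdsWithin] with δ hδ
    have hδ' : (0:ℝ) < δ := hδ
    refine ContinuousOn.aestronglyMeasurable ?_ measurableSet_Ioi
    have hGm := HLT.Gm_cont hδ'
    exact (((Real.continuous_exp.comp continuous_neg).mul
      (hGm.comp (Real.continuous_exp.comp continuous_neg))).continuousOn).mul
      (continuousOn_id.rpow_const fun x hx => Or.inl (ne_of_gt hx))
  · filter_upwards [self_mem_nhdsWithin] with δ hδ
    have hδ' : (0:ℝ) < δ := hδ
    filter_upwards [ae_restrict_mem measurableSet_Ioi] with s hs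
    have hs' : (0:ℝ) < s := hs
    have hx0 : 0 < Real.exp (-s) := Real.exp_pos _
    have hsp : 0 < s ^ (Δ-1) := Real.rpow_pos_of_pos hs' _
    have hGnn : 0 ≤ HLT.Gm δ (Real.exp (-s)) := by
      unfold HLT.Gm
      refine div_nonneg (le_min zero_le_one (le_max_left _ _)) ?_
      exact le_trans hx0.le (le_max_left _ _)
    rw [Real.norm_eq_abs, abs_of_nonneg (by positivity)]
    rcases le_or_gt 2 s with h2 | h2
    · have hnum : min 1 (max 0 ((Real.exp (-s) - c)/δ)) = 0 := by
        have hxs : Real.exp (-s) ≤ Real.exp (-2) := Real.exp_le_exp.mpr (by linarith)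
        have hee : Real.exp (-2) < c := Real.exp_lt_exp.mpr (by norm_num)
        rw [max_eq_left (div_nonpos_of_nonpos_of_nonneg (by linarith) hδ'.le)]
        simp
      unfold HLT.Gm
      rw [hnum, zero_div, mul_zero, zero_mul]
      positivity
    · have hb1 : Real.exp (-s) * HLT.Gm δ (Real.exp (-s)) ≤ 1 := by
        unfold HLT.Gm
        rw [mul_div_assoc']
        rw [div_le_one (lt_of_lt_of_le hx0 (le_max_left _ _))]
        calc Real.exp (-s) * min 1 (max 0 ((Real.exp (-s) - c)/δ))
            ≤ Real.exp (-s) * 1 := mul_le_mul_of_nonneg_left (min_le_left _ _) hx0.le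
          _ = Real.exp (-s) := mul_one _
          _ ≤ max (Real.exp (-s)) c := le_max_left _ _
      calc Real.exp (-s) * HLT.Gm δ (Real.exp (-s)) * s ^ (Δ-1)
          ≤ 1 * s ^ (Δ-1) := mul_le_mul_of_nonneg_right hb1 hsp.le
        _ = s ^ (Δ-1) := one_mul _
        _ ≤ Real.exp 2 * (Real.exp (-s) * s ^ (Δ-1)) := by
            rw [← mul_assoc, ← Real.exp_add]
            nth_rewrite 1 [← one_mul (s ^ (Δ-1))]
            refine mul_le_mul_of_nonneg_right ?_ hsp.le
            rw [← Real.exp_zero]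
            exact Real.exp_le_exp.mpr (by linarith)
  · filter_upwards [ae_restrict_mem measurableSet_Ioi] with s hs
    have hs' : (0:ℝ) < s := hs
    have hx0 : 0 < Real.exp (-s) := Real.exp_pos _
    rcases lt_or_ge s 1 with h1 | h1
    · rw [if_pos h1]
      have hxc : c < Real.exp (-s) := Real.exp_lt_exp.mpr (by linarith)
      refine Tendsto.congr' ?_ tendsto_const_nhds
      filter_upwards [Ioo_mem_nhdsGT_of_mem ⟨le_refl (0:ℝ), sub_pos.mpr hxc⟩] with δ hδ
      have hnum : min 1 (max 0 ((Real.exp (-s) - c)/δ)) = 1 := by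
        have hge : (1:ℝ) ≤ (Real.exp (-s) - c)/δ := by
          rw [le_div_iff₀ hδ.1]; linarith [hδ.2]
        rw [max_eq_right (by linarith), min_eq_left hge]
      have hden : max (Real.exp (-s)) c = Real.exp (-s) := max_eq_left (by linarith)
      unfold HLT.Gm
      rw [hnum, hden, mul_div_assoc', mul_one, div_self hx0.ne', one_mul]
    · rw [if_neg (not_lt.mpr h1)]
      have hxc : Real.exp (-s) ≤ c := Real.exp_le_exp.mpr (by linarith)
      refine Tendsto.congr' ?_ tendsto_const_nhds
      filter_upwards [self_mem_nhdsWithin] with δ hδ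
      have hδ' : (0:ℝ) < δ := hδ
      have hnum : min 1 (max 0 ((Real.exp (-s) - c)/δ)) = 0 := by
        rw [max_eq_left (div_nonpos_of_nonpos_of_nonneg (by linarith) hδ'.le)]
        simp
      unfold HLT.Gm
      rw [hnum, zero_div, mul_zero, zero_mul]

lemma HLT.main (hneg : ∀ x < (0 : ℝ), f x = 0)
    (hint : ∀ t : ℝ, 0 < t → Integrable (fun v => Real.exp (-t * v)) f.measure)
    {Δ : ℝ} (hΔ : 0 < Δ)
    (hlim : Tendsto (fun t : ℝ => t ^ Δ * ∫ v, Real.exp (-t * v) ∂f.measure)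
      (𝓝[>] (0 : ℝ)) (𝓝 1)) :
    Tendsto (fun t : ℝ => t ^ Δ * f (1/t)) (𝓝[>] (0:ℝ)) (𝓝 (1/(Δ * Real.Gamma Δ))) := by
  have hΓ : 0 < Real.Gamma Δ := Real.Gamma_pos_of_pos hΔ
  set c := Real.exp (-1) with hc
  have hc0 : 0 < c := Real.exp_pos _
  set T : ℝ := 1/(Δ * Real.Gamma Δ) with hT
  rw [Metric.tendsto_nhds]
  intro ε hε
  have hTp : Tendsto (fun δ => (∫ s in Ioi (0:ℝ),
      Real.exp (-s) * HLT.Gp δ (Real.exp (-s)) * s ^ (Δ-1)) / Real.Gamma Δ)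
      (𝓝[>] (0:ℝ)) (𝓝 T) := by
    have := (HLT.rhs_p_lim hΔ).div_const (Real.Gamma Δ)
    rwa [show 1/Δ / Real.Gamma Δ = T by rw [hT]; field_simp] at this
  have hTm : Tendsto (fun δ => (∫ s in Ioi (0:ℝ),
      Real.exp (-s) * HLT.Gm δ (Real.exp (-s)) * s ^ (Δ-1)) / Real.Gamma Δ)
      (𝓝[>] (0:ℝ)) (𝓝 T) := by
    have := (HLT.rhs_m_lim hΔ).div_const (Real.Gamma Δ)
    rwa [show 1/Δ / Real.Gamma Δ = T by rw [hT]; field_simp] at this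
  have e1 := Metric.tendsto_nhds.mp hTp (ε/3) (by positivity)
  have e2 := Metric.tendsto_nhds.mp hTm (ε/3) (by positivity)
  have e3 : Ioo (0:ℝ) (c/2) ∈ 𝓝[>] (0:ℝ) := Ioo_mem_nhdsGT_of_mem ⟨le_refl _, by positivity⟩
  obtain ⟨δ, h1, h2, h3⟩ := (e1.and (e2.and e3)).exists
  have hδ : 0 < δ := h3.1
  have hδc : δ < c := lt_trans h3.2 (by linarith)
  -- limits for the two continuous functions
  have hp := HLT.cont_lim hneg hint hΔ hlim (HLT.Gp_cont hδ hδc)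
  have hm := HLT.cont_lim hneg hint hΔ hlim (HLT.Gm_cont hδ)
  have ep := Metric.tendsto_nhds.mp hp (ε/3) (by positivity)
  have em := Metric.tendsto_nhds.mp hm (ε/3) (by positivity)
  filter_upwards [ep, em, self_mem_nhdsWithin] with t hpt hmt ht
  have ht' : (0:ℝ) < t := ht
  have htΔ : 0 < t ^ Δ := Real.rpow_pos_of_pos ht' _
  -- the sandwich at time t
  have hind : f (1/t) = ∫ v, (Iic (1/t)).indicator (fun _ => (1:ℝ)) v ∂f.measure := by
    rw [integral_indicator measurableSet_Iic, setIntegral_const, smul_eq_mul, mul_one,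
      measureReal_def, HLT.toReal_Iic hneg]
  have hindint : Integrable ((Iic (1/t)).indicator (fun _ => (1:ℝ))) f.measure := by
    rw [integrable_indicator_iff measurableSet_Iic]
    refine (integrableOn_const_iff).mpr (Or.inr ?_)
    exact lt_of_le_of_ne le_top (HLT.fin_Iic hneg _)
  have hiff : ∀ v : ℝ, (Iic (1/t)).indicator (fun _ => (1:ℝ)) v
      = if c ≤ Real.exp (-t*v) then 1 else 0 := by
    intro v
    rw [Set.indicator_apply]
    refine if_congr ?_ rfl rfl
    rw [mem_Iic, hc]
    rw [Real.exp_le_exp]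
    constructor
    · intro h
      have h2 := mul_le_mul_of_nonneg_left h ht'.le
      rw [mul_one_div, div_self ht'.ne'] at h2
      linarith
    · intro h
      rw [le_div_iff₀ ht']
      have : t * v ≤ 1 := by linarith
      linarith [mul_comm v t]
  have hlow : t ^ Δ * ∫ v, Real.exp (-t*v) * HLT.Gm δ (Real.exp (-t*v)) ∂f.measure
      ≤ t ^ Δ * f (1/t) := by
    rw [hind]
    refine mul_le_mul_of_nonneg_left ?_ htΔ.le
    refine integral_mono_ae (HLT.cont_integrable hneg hint (HLT.Gm_cont hδ) ht') hindint ?_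
    filter_upwards [HLT.ae_nonneg hneg] with v hv
    rw [hiff v]
    exact HLT.Gm_le hδ (Real.exp_pos _)
  have hhigh : t ^ Δ * f (1/t)
      ≤ t ^ Δ * ∫ v, Real.exp (-t*v) * HLT.Gp δ (Real.exp (-t*v)) ∂f.measure := by
    rw [hind]
    refine mul_le_mul_of_nonneg_left ?_ htΔ.le
    refine integral_mono_ae hindint (HLT.cont_integrable hneg hint (HLT.Gp_cont hδ hδc) ht') ?_
    filter_upwards [HLT.ae_nonneg hneg] with v hv
    rw [hiff v]
    exact HLT.Gp_ge hδ (Real.exp_pos _)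
  rw [Real.dist_eq] at hpt hmt h1 h2 ⊢
  rw [abs_lt] at hpt hmt h1 h2 ⊢
  constructor <;> nlinarith [hpt.1, hpt.2, hmt.1, hmt.2, h1.1, h1.2, h2.1, h2.2]

/-- Hardy–Littlewood Tauberian theorem for the Laplace–Stieltjes transform. -/
theorem hardy_littlewood_tauberian
    (f : StieltjesFunction ℝ) (hneg : ∀ x < (0 : ℝ), f x = 0)
    (hint : ∀ t : ℝ, 0 < t → Integrable (fun v => Real.exp (-t * v)) f.measure)
    (Δ : ℝ) (hΔ : 0 < Δ)
    (hlim : Tendsto (fun t : ℝ => t ^ Δ * ∫ v, Real.exp (-t * v) ∂f.measure)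
      (𝓝[>] (0 : ℝ)) (𝓝 1)) :
    Tendsto (fun Λ : ℝ => Λ ^ (-Δ) * Real.Gamma (Δ + 1) * f Λ) atTop (𝓝 1) := by
  have hΓ : 0 < Real.Gamma Δ := Real.Gamma_pos_of_pos hΔ
  have hmain := HLT.main hneg hint hΔ hlim
  have hcomp := (hmain.comp tendsto_inv_atTop_nhdsGT_zero).const_mul (Real.Gamma (Δ + 1))
  have hval : Real.Gamma (Δ + 1) * (1/(Δ * Real.Gamma Δ)) = 1 := by
    rw [Real.Gamma_add_one hΔ.ne']
    field_simp
  rw [hval] at hcomp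
  refine hcomp.congr' ?_
  filter_upwards [eventually_gt_atTop (0:ℝ)] with Λ hΛ
  simp only [Function.comp]
  rw [one_div, inv_inv, Real.rpow_neg hΛ.le, ← Real.inv_rpow hΛ.le]
  ring
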